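/- Let ψ : [0,ρ] → [0,1) be continuous and increasing (playing the role of Ψ⁻¹), let u₁ ≥ u₂ ≥ ⋯ ≥ 0 with ∑_k u_k ≤ ρ, and ρ_k = ρ + k u_{k+1} − ∑_{i=1}^k u_i. Then for every i ≥ 1, ∑_{k=i}^∞ (1/k) ∫_{ρ_k}^{ρ_{k−1}} ds/(1 − ψ(s)) ≤ ∫₀^ρ ds/(1 − ψ(s)), with equality when u₁ = ρ and u_k = 0 for all k ≥ 2 and i = 1. -/

import Mathlib

/-- `ψ` plays the role of `Ψ⁻¹`. The sum over `k ≥ i` is written as a sum over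
`j : ℕ` of the terms of index `k = i + j`. -/
theorem stmt13 (ρ : ℝ) (hρ : 0 < ρ) (ψ : ℝ → ℝ)
    (hψc : ContinuousOn ψ (Set.Icc 0 ρ))
    (hψm : StrictMonoOn ψ (Set.Icc 0 ρ))
    (hψr : ∀ s ∈ Set.Icc (0 : ℝ) ρ, ψ s ∈ Set.Ico (0 : ℝ) 1)
    (u : ℕ → ℝ) (hu0 : ∀ k, 1 ≤ k → 0 ≤ u k)
    (humono : ∀ k, 1 ≤ k → u (k + 1) ≤ u k)
    (husum : Summable fun k : ℕ => u (k + 1))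
    (hle : ∑' k : ℕ, u (k + 1) ≤ ρ)
    (ρk : ℕ → ℝ)
    (hρk : ∀ k, ρk k = ρ + k * u (k + 1) - ∑ i ∈ Finset.Icc 1 k, u i) :
    (∀ i : ℕ, 1 ≤ i →
      ∑' j : ℕ, (1 / ((i + j : ℕ) : ℝ)) *
          ∫ s in ρk (i + j)..ρk (i + j - 1), 1 / (1 - ψ s)
        ≤ ∫ s in (0 : ℝ)..ρ, 1 / (1 - ψ s)) ∧
    ((u 1 = ρ ∧ ∀ k, 2 ≤ k → u k = 0) →
      ∑' j : ℕ, (1 / ((1 + j : ℕ) : ℝ)) *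
          ∫ s in ρk (1 + j)..ρk (1 + j - 1), 1 / (1 - ψ s)
        = ∫ s in (0 : ℝ)..ρ, 1 / (1 - ψ s)) := by
  set F : ℝ → ℝ := fun s => 1 / (1 - ψ s) with hFdef
  -- basic properties of F
  have hFc : ContinuousOn F (Set.Icc 0 ρ) := by
    apply ContinuousOn.div continuousOn_const (continuousOn_const.sub hψc)
    intro s hs
    have h1 := (hψr s hs).2
    intro h; simp only [Pi.sub_apply, sub_eq_zero] at h; linarith
  have hFnn : ∀ s ∈ Set.Icc (0 : ℝ) ρ, 0 ≤ F s := by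
    intro s hs
    have h1 := (hψr s hs).2
    have : (0:ℝ) < 1 - ψ s := by linarith
    positivity
  -- monotonicity of u on [1, ∞)
  have humono' : ∀ i j : ℕ, 1 ≤ i → i ≤ j → u j ≤ u i := by
    intro i j hi hij
    induction j with
    | zero => omega
    | succ n ih =>
      rcases Nat.eq_or_lt_of_le hij with h | h
      · rw [← h]
      · have hn : i ≤ n := Nat.lt_succ_iff.mp h
        exact le_trans (humono n (le_trans hi hn)) (ih hn)
  -- partial sums
  have hSle : ∀ k : ℕ, ∑ i ∈ Finset.Icc 1 k, u i ≤ ρ := by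
    intro k
    have h1 : ∀ m : ℕ, ∑ i ∈ Finset.Icc 1 m, u i = ∑ j ∈ Finset.range m, u (j + 1) := by
      intro m
      induction m with
      | zero => simp
      | succ p ih =>
        rw [Finset.sum_Icc_succ_top (by omega : 1 ≤ p + 1), Finset.sum_range_succ, ih]
    rw [h1 k]
    refine le_trans (Summable.sum_le_tsum (Finset.range k)
      (fun i _ => hu0 (i + 1) (by omega)) husum) hle
  have hSmul : ∀ k : ℕ, (k : ℝ) * u (k + 1) ≤ ∑ i ∈ Finset.Icc 1 k, u i := by
    intro k
    have : ∑ _i ∈ Finset.Icc 1 k, u (k + 1) ≤ ∑ i ∈ Finset.Icc 1 k, u i := by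
      apply Finset.sum_le_sum
      intro i hi
      rw [Finset.mem_Icc] at hi
      exact humono' i (k + 1) hi.1 (by omega)
    simpa [Finset.sum_const, Nat.card_Icc, mul_comm] using this
  have hmem : ∀ k, ρk k ∈ Set.Icc (0 : ℝ) ρ := by
    intro k
    have hS := hSle k
    have hM := hSmul k
    have hu' : 0 ≤ u (k + 1) := hu0 (k + 1) (by omega)
    have hk : (0:ℝ) ≤ (k : ℝ) := Nat.cast_nonneg k
    constructor
    · rw [hρk k]; nlinarith
    · rw [hρk k]; linarith
  -- antitone
  have hstep : ∀ k : ℕ, ρk (k + 1) ≤ ρk k := by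
    intro k
    rw [hρk k, hρk (k + 1)]
    rw [Finset.sum_Icc_succ_top (by omega : 1 ≤ k + 1)]
    have h := humono (k + 1) (by omega)
    have hk : (0:ℝ) ≤ (k : ℝ) := Nat.cast_nonneg k
    push_cast
    nlinarith
  have hanti : ∀ m n : ℕ, m ≤ n → ρk n ≤ ρk m := by
    intro m n hmn
    induction n with
    | zero => simp_all
    | succ p ih =>
      rcases Nat.eq_or_lt_of_le hmn with h | h
      · rw [h]
      · exact le_trans (hstep p) (ih (Nat.lt_succ_iff.mp h))
  -- integrability
  have hInt : ∀ a b : ℝ, a ∈ Set.Icc (0:ℝ) ρ → b ∈ Set.Icc (0:ℝ) ρ →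
      IntervalIntegrable F MeasureTheory.volume a b := by
    intro a b ha hb
    apply ContinuousOn.intervalIntegrable
    apply hFc.mono
    rw [Set.uIcc]
    exact Set.Icc_subset_Icc (le_min ha.1 hb.1) (max_le ha.2 hb.2)
  -- nonnegativity of elementary integrals
  have hInn : ∀ a b : ℝ, a ∈ Set.Icc (0:ℝ) ρ → b ∈ Set.Icc (0:ℝ) ρ → a ≤ b →
      0 ≤ ∫ s in a..b, F s := by
    intro a b ha hb hab
    apply intervalIntegral.integral_nonneg hab
    intro s hs
    exact hFnn s ⟨le_trans ha.1 hs.1, le_trans hs.2 hb.2⟩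
  -- bound of a sub-interval integral by the full one
  have hIsub : ∀ a b : ℝ, a ∈ Set.Icc (0:ℝ) ρ → b ∈ Set.Icc (0:ℝ) ρ → a ≤ b →
      (∫ s in a..b, F s) ≤ ∫ s in (0:ℝ)..ρ, F s := by
    intro a b ha hb hab
    apply intervalIntegral.integral_mono_interval ha.1 hab hb.2
    · exact MeasureTheory.ae_restrict_of_forall_mem measurableSet_Ioc
        fun s hs => hFnn s ⟨le_of_lt hs.1, hs.2⟩
    · exact hInt 0 ρ ⟨le_refl _, le_of_lt hρ⟩ ⟨le_of_lt hρ, le_refl _⟩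
  constructor
  · -- inequality
    intro i hi
    have hterm_nn : ∀ j : ℕ,
        0 ≤ (1 / ((i + j : ℕ) : ℝ)) * ∫ s in ρk (i + j)..ρk (i + j - 1), F s := by
      intro j
      apply mul_nonneg (by positivity)
      exact hInn _ _ (hmem _) (hmem _) (hanti _ _ (by omega))
    apply Real.tsum_le_of_sum_range_le hterm_nn
    intro n
    -- telescoping
    have htel : ∀ m : ℕ,
        ∑ j ∈ Finset.range m, (∫ s in ρk (i + j)..ρk (i + j - 1), F s)
          = ∫ s in ρk (i + m - 1)..ρk (i - 1), F s := by
      intro m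
      induction m with
      | zero => simp
      | succ p ih =>
        rw [Finset.sum_range_succ, ih, add_comm]
        have h1 : i + (p + 1) - 1 = i + p := by omega
        rw [h1]
        exact intervalIntegral.integral_add_adjacent_intervals
          (hInt _ _ (hmem _) (hmem _)) (hInt _ _ (hmem _) (hmem _))
    have hle1 : ∑ j ∈ Finset.range n,
        (1 / ((i + j : ℕ) : ℝ)) * (∫ s in ρk (i + j)..ρk (i + j - 1), F s)
        ≤ ∑ j ∈ Finset.range n, (∫ s in ρk (i + j)..ρk (i + j - 1), F s) := by
      apply Finset.sum_le_sum
      intro j _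
      have hInn' : 0 ≤ ∫ s in ρk (i + j)..ρk (i + j - 1), F s :=
        hInn _ _ (hmem _) (hmem _) (hanti _ _ (by omega))
      have h1 : (1 : ℝ) ≤ ((i + j : ℕ) : ℝ) := by
        exact_mod_cast (by omega : 1 ≤ i + j)
      nlinarith [div_le_one_of_le₀ h1 (by linarith : (0:ℝ) ≤ ((i + j : ℕ) : ℝ))]
    refine le_trans hle1 ?_
    rw [htel n]
    exact hIsub _ _ (hmem _) (hmem _) (hanti _ _ (by omega))
  · -- equality case
    rintro ⟨hu1, hu2⟩
    have hρ0 : ρk 0 = ρ := by rw [hρk 0]; simp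
    have hρpos : ∀ k : ℕ, 1 ≤ k → ρk k = 0 := by
      intro k hk
      rw [hρk k]
      have h1 : u (k + 1) = 0 := hu2 (k + 1) (by omega)
      have h2 : ∑ i ∈ Finset.Icc 1 k, u i = ρ := by
        rw [Finset.sum_eq_single 1]
        · exact hu1
        · intro b hb hb1
          rw [Finset.mem_Icc] at hb
          exact hu2 b (by omega)
        · intro h; rw [Finset.mem_Icc] at h; omega
      rw [h1, h2]; ring
    rw [tsum_eq_single 0]
    · simp [hρpos 1 (le_refl 1), hρ0]
    · intro j hj
      have h1 : ρk (1 + j) = 0 := hρpos (1 + j) (by omega)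
      have h2 : ρk (1 + j - 1) = 0 := hρpos (1 + j - 1) (by omega)
      rw [h1, h2, intervalIntegral.integral_same, mul_zero]
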